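/- Let M ≥ 1 and L ≥ 1 be integers, N = M·L, and let Ω̄_1, …, Ω̄_M ∈ ℝ be the steering angles of the M sparse subarrays. Define the full-array codeword w ∈ ℂ^N by w_{nM + (m−1)} = e^{−iπ(m−1)Ω̄_m} · e^{−iπMnΩ̄_m} for n = 0, …, L−1 and m = 1, …, M (interleaved subarray structure). Then for every Ω ∈ ℝ, the full-array response satisfies v(Ω,N)^H w = ∑_{m=1}^{M} e^{iπ(m−1)(Ω − Ω̄_m)} · A_{M,L}(Ω − Ω̄_m), i.e., it decomposes as the sum of the M sparse-subarray array factors with explicit per-subarray phase offsets. -/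

import Mathlib

open Finset

/-- The sparse-subarray array factor `A_{M,L}(δ) = ∑_{n=0}^{L-1} e^{iπMnδ}`. -/
noncomputable def arrayFactor (M L : ℕ) (δ : ℝ) : ℂ :=
  ∑ n ∈ Finset.range L, Complex.exp ((Real.pi * M * n * δ : ℝ) * Complex.I)

lemma range_mul_reindex (M L : ℕ) (g : ℕ → ℂ) :
    ∑ k ∈ Finset.range (M * L), g k
      = ∑ m ∈ Finset.range M, ∑ n ∈ Finset.range L, g (n * M + m) := by
  rw [← Finset.sum_product']
  refine Finset.sum_nbij' (fun k => (k % M, k / M)) (fun p => p.2 * M + p.1) ?_ ?_ ?_ ?_ ?_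
  · intro k hk
    simp only [Finset.mem_range] at hk
    have hM : 0 < M := by
      rcases Nat.eq_zero_or_pos M with h | h
      · simp [h] at hk
      · exact h
    simp only [Finset.mem_product, Finset.mem_range]
    exact ⟨Nat.mod_lt _ hM, Nat.div_lt_of_lt_mul (by linarith [hk])⟩
  · intro p hp
    simp only [Finset.mem_product, Finset.mem_range] at hp
    simp only [Finset.mem_range]
    calc p.2 * M + p.1 < p.2 * M + M := by omega
    _ = (p.2 + 1) * M := by ring
    _ ≤ L * M := Nat.mul_le_mul_right _ hp.2
    _ = M * L := Nat.mul_comm _ _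
  · intro k hk
    simp only
    exact Nat.div_add_mod' k M
  · intro p hp
    simp only [Finset.mem_product, Finset.mem_range] at hp
    have hM : 0 < M := by omega
    have h1 : (p.2 * M + p.1) % M = p.1 := by
      rw [add_comm, Nat.add_mul_mod_self_right, Nat.mod_eq_of_lt hp.1]
    have h2 : (p.2 * M + p.1) / M = p.2 := by
      rw [mul_comm, Nat.mul_add_div hM, Nat.div_eq_of_lt hp.1, add_zero]
    rw [h1, h2]
  · intro k hk
    rw [Nat.div_add_mod' k M]

/-- Sparse-subarray (interleaved) codeword decomposition.  Subarray `m` (here indexed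
`m = 0, …, M−1`, corresponding to `m−1` in the paper) occupies the antennas with indices
`≡ m (mod M)` and is steered to `Ω̄_m`; the codeword entries are
`w_{nM+m} = e^{−iπ m Ω̄_m} · e^{−iπ M n Ω̄_m}`.  Then for every spatial angle `Ω`, the
full-array response `v(Ω,N)^H w` (with `v(Ω,N)_k = e^{−iπkΩ}`) equals
`∑_{m} e^{iπ m (Ω−Ω̄_m)} · A_{M,L}(Ω−Ω̄_m)`. -/
theorem sparse_subarray_response_decomposition (M L : ℕ) (hM : 1 ≤ M) (hL : 1 ≤ L)
    (N : ℕ) (hN : N = M * L) (Ωbar : ℕ → ℝ) (w : ℕ → ℂ)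
    (hw : ∀ n m : ℕ, n < L → m < M →
      w (n * M + m) = Complex.exp (-((Real.pi * m * Ωbar m : ℝ)) * Complex.I) *
        Complex.exp (-((Real.pi * M * n * Ωbar m : ℝ)) * Complex.I))
    (Ω : ℝ) :
    ∑ k ∈ Finset.range N,
        (starRingEnd ℂ) (Complex.exp (-((Real.pi * k * Ω : ℝ)) * Complex.I)) * w k
      = ∑ m ∈ Finset.range M,
          Complex.exp ((Real.pi * m * (Ω - Ωbar m) : ℝ) * Complex.I) *
            arrayFactor M L (Ω - Ωbar m) := by
  subst hN
  rw [range_mul_reindex]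
  refine Finset.sum_congr rfl fun m hm => ?_
  simp only [Finset.mem_range] at hm
  rw [arrayFactor, Finset.mul_sum]
  refine Finset.sum_congr rfl fun n hn => ?_
  simp only [Finset.mem_range] at hn
  rw [hw n m hn hm, ← Complex.exp_conj, ← Complex.exp_add, ← Complex.exp_add,
    ← Complex.exp_add]
  congr 1
  simp only [map_mul, map_neg, Complex.conj_ofReal, Complex.conj_I]
  push_cast
  ring
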